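/- For every ρ with 0 < ρ < π, the image of the full parametrization domain (−π, π] × [−π/2, π/2] under the map S_ρ(u, v) = γ_{u,v}(ρ) is a subset of ℝ³ homeomorphic to the standard unit 2-sphere; in particular the geodesic sphere of radius ρ in S²×ℝ is a simply connected closed surface (Proposition 2.3). -/

import Mathlib

open Real

/-- The geodesic curves of `S² × ℝ` starting at `(1,0,0)` in the Euclidean model,
with longitude `u`, altitude `v` and arc-length parameter `τ` (equation (2.2)). -/
noncomputable def geo (u v τ : ℝ) : EuclideanSpace ℝ (Fin 3) :=
  (WithLp.equiv 2 (Fin 3 → ℝ)).symm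
    ![Real.exp (τ * Real.sin v) * Real.cos (τ * Real.cos v),
      Real.exp (τ * Real.sin v) * Real.sin (τ * Real.cos v) * Real.cos u,
      Real.exp (τ * Real.sin v) * Real.sin (τ * Real.cos v) * Real.sin u]

namespace SphereHomAux

/-- The "sinc"-type profile function `t ↦ sin (ρ t) / t`, extended by `ρ` at `t = 0`. -/
noncomputable def sfun (ρ t : ℝ) : ℝ := if t = 0 then ρ else Real.sin (ρ * t) / t

lemma sfun_mul (ρ t : ℝ) : sfun ρ t * t = Real.sin (ρ * t) := by
  rcases eq_or_ne t 0 with rfl | h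
  · simp [sfun]
  · simp only [sfun, if_neg h]
    field_simp

lemma sfun_pos {ρ : ℝ} (h0 : 0 < ρ) (hπ : ρ < π) {t : ℝ} (ht0 : 0 ≤ t) (ht1 : t ≤ 1) :
    0 < sfun ρ t := by
  rcases eq_or_lt_of_le ht0 with h | h
  · simp [sfun, ← h, h0]
  · have ht : t ≠ 0 := ne_of_gt h
    have h1 : 0 < ρ * t := mul_pos h0 h
    have h2 : ρ * t < π := by
      calc ρ * t ≤ ρ * 1 := by nlinarith
        _ < π := by linarith
    simp only [sfun, if_neg ht]
    exact div_pos (Real.sin_pos_of_pos_of_lt_pi h1 h2) h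

lemma sfun_continuous (ρ : ℝ) : Continuous (sfun ρ) := by
  rw [continuous_iff_continuousAt]
  intro t
  rcases eq_or_ne t 0 with rfl | ht
  · -- continuity at 0, using the derivative of `sin (ρ t)` at `0`
    have hd : HasDerivAt (fun s : ℝ => Real.sin (ρ * s)) ρ 0 := by
      have := (Real.hasDerivAt_sin (ρ * 0)).comp 0 ((hasDerivAt_id (0 : ℝ)).const_mul ρ)
      simpa [Function.comp_def] using this
    have hslope := hasDerivAt_iff_tendsto_slope.mp hd
    have hs : Filter.Tendsto (sfun ρ) (nhdsWithin 0 {(0 : ℝ)}ᶜ) (nhds ρ) := by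
      refine hslope.congr' ?_
      filter_upwards [self_mem_nhdsWithin] with x hx
      have hx0 : x ≠ 0 := hx
      simp [slope, sfun, hx0, div_eq_inv_mul]
    have hp : Filter.Tendsto (sfun ρ) (pure (0 : ℝ)) (nhds ρ) := by
      have : sfun ρ 0 = ρ := by simp [sfun]
      simpa [this] using (tendsto_pure_nhds (sfun ρ) 0)
    have : Filter.Tendsto (sfun ρ) (nhdsWithin 0 {(0 : ℝ)}ᶜ ⊔ pure 0) (nhds ρ) :=
      hs.sup hp
    rw [nhdsNE_sup_pure] at this
    simpa [ContinuousAt, sfun] using this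
  · have hc : ContinuousAt (fun s : ℝ => Real.sin (ρ * s) / s) t :=
      ContinuousAt.div (by fun_prop) continuousAt_id ht
    refine hc.congr ?_
    filter_upwards [isOpen_compl_singleton.mem_nhds (by simpa using ht)] with x hx
    have hx0 : x ≠ 0 := hx
    simp [sfun, hx0]

/-- A continuous map from `ℝ³` which restricts on the unit sphere to the
parametrization of the geodesic sphere. -/
noncomputable def F (ρ : ℝ) (p : EuclideanSpace ℝ (Fin 3)) : EuclideanSpace ℝ (Fin 3) :=
  (WithLp.equiv 2 (Fin 3 → ℝ)).symm
    ![Real.exp (ρ * p 0) * Real.cos (ρ * Real.sqrt (1 - p 0 ^ 2)),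
      Real.exp (ρ * p 0) * sfun ρ (Real.sqrt (1 - p 0 ^ 2)) * p 1,
      Real.exp (ρ * p 0) * sfun ρ (Real.sqrt (1 - p 0 ^ 2)) * p 2]

lemma coord_continuous (i : Fin 3) :
    Continuous (fun p : EuclideanSpace ℝ (Fin 3) => p i) :=
  (continuous_apply i).comp (PiLp.continuous_ofLp 2 (fun _ : Fin 3 => ℝ))

lemma F_continuous (ρ : ℝ) : Continuous (F ρ) := by
  have h0 := coord_continuous 0
  have h1 := coord_continuous 1
  have h2 := coord_continuous 2
  have hs : Continuous (fun p : EuclideanSpace ℝ (Fin 3) =>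
      Real.sqrt (1 - p 0 ^ 2)) := (continuous_const.sub (h0.pow 2)).sqrt
  have hexp : Continuous (fun p : EuclideanSpace ℝ (Fin 3) =>
      Real.exp (ρ * p 0)) := Real.continuous_exp.comp (continuous_const.mul h0)
  have hcos : Continuous (fun p : EuclideanSpace ℝ (Fin 3) =>
      Real.cos (ρ * Real.sqrt (1 - p 0 ^ 2))) :=
    Real.continuous_cos.comp (continuous_const.mul hs)
  have hsf : Continuous (fun p : EuclideanSpace ℝ (Fin 3) =>
      sfun ρ (Real.sqrt (1 - p 0 ^ 2))) := (sfun_continuous ρ).comp hs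
  refine (PiLp.continuous_toLp 2 (fun _ : Fin 3 => ℝ)).comp ?_
  refine continuous_pi fun i => ?_
  fin_cases i
  · simpa [Pi.mul_def] using hexp.mul hcos
  · simpa [Pi.mul_def] using (hexp.mul hsf).mul h1
  · simpa [Pi.mul_def] using (hexp.mul hsf).mul h2

lemma sum_sq_of_mem_sphere {q : EuclideanSpace ℝ (Fin 3)}
    (hq : q ∈ Metric.sphere (0 : EuclideanSpace ℝ (Fin 3)) 1) :
    q 0 ^ 2 + q 1 ^ 2 + q 2 ^ 2 = 1 := by
  rw [mem_sphere_zero_iff_norm, EuclideanSpace.norm_eq] at hq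
  rw [Real.sqrt_eq_one] at hq
  simpa [Fin.sum_univ_three, Real.norm_eq_abs, sq_abs] using hq

lemma F_injOn {ρ : ℝ} (h0 : 0 < ρ) (hπ : ρ < π) :
    Set.InjOn (F ρ) (Metric.sphere (0 : EuclideanSpace ℝ (Fin 3)) 1) := by
  intro p hp q hq h
  have hsp := sum_sq_of_mem_sphere hp
  have hsq := sum_sq_of_mem_sphere hq
  set sp := Real.sqrt (1 - p 0 ^ 2) with hspdef
  set sq' := Real.sqrt (1 - q 0 ^ 2) with hsqdef
  have hsp2 : sp ^ 2 = 1 - p 0 ^ 2 := Real.sq_sqrt (by nlinarith)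
  have hsq2 : sq' ^ 2 = 1 - q 0 ^ 2 := Real.sq_sqrt (by nlinarith)
  have hsp0 : 0 ≤ sp := Real.sqrt_nonneg _
  have hsq0 : 0 ≤ sq' := Real.sqrt_nonneg _
  have hsp1 : sp ≤ 1 := by nlinarith
  have hsq1 : sq' ≤ 1 := by nlinarith
  have e0 : F ρ p 0 = F ρ q 0 := by rw [h]
  have e1 : F ρ p 1 = F ρ q 1 := by rw [h]
  have e2 : F ρ p 2 = F ρ q 2 := by rw [h]
  simp only [F, WithLp.equiv_symm_apply, PiLp.toLp_apply, Matrix.cons_val_zero, Matrix.cons_val_one,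
    Matrix.head_cons, Matrix.cons_val_two, Matrix.tail_cons] at e0 e1 e2
  rw [← hspdef, ← hsqdef] at e0 e1 e2
  -- the norm of `F ρ p` determines `p 0`
  have hfp : sfun ρ sp * sp = Real.sin (ρ * sp) := sfun_mul ρ sp
  have hfq : sfun ρ sq' * sq' = Real.sin (ρ * sq') := sfun_mul ρ sq'
  have hpy1 := Real.sin_sq_add_cos_sq (ρ * sp)
  have hpy2 := Real.sin_sq_add_cos_sq (ρ * sq')
  have hnp : (Real.exp (ρ * p 0)) ^ 2 =
      (Real.exp (ρ * p 0) * Real.cos (ρ * sp)) ^ 2 +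
      (Real.exp (ρ * p 0) * sfun ρ sp * p 1) ^ 2 +
      (Real.exp (ρ * p 0) * sfun ρ sp * p 2) ^ 2 := by
    have hys : p 1 ^ 2 + p 2 ^ 2 = sp ^ 2 := by rw [hsp2]; linarith
    linear_combination (-(Real.exp (ρ * p 0)) ^ 2) * hpy1 +
      (-(Real.exp (ρ * p 0)) ^ 2 * (sfun ρ sp) ^ 2) * hys +
      (-(Real.exp (ρ * p 0)) ^ 2 * (sfun ρ sp * sp + Real.sin (ρ * sp))) * hfp
  have hnq : (Real.exp (ρ * q 0)) ^ 2 =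
      (Real.exp (ρ * q 0) * Real.cos (ρ * sq')) ^ 2 +
      (Real.exp (ρ * q 0) * sfun ρ sq' * q 1) ^ 2 +
      (Real.exp (ρ * q 0) * sfun ρ sq' * q 2) ^ 2 := by
    have hys : q 1 ^ 2 + q 2 ^ 2 = sq' ^ 2 := by rw [hsq2]; linarith
    linear_combination (-(Real.exp (ρ * q 0)) ^ 2) * hpy2 +
      (-(Real.exp (ρ * q 0)) ^ 2 * (sfun ρ sq') ^ 2) * hys +
      (-(Real.exp (ρ * q 0)) ^ 2 * (sfun ρ sq' * sq' + Real.sin (ρ * sq'))) * hfq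
  have hexp2 : (Real.exp (ρ * p 0)) ^ 2 = (Real.exp (ρ * q 0)) ^ 2 := by
    rw [hnp, hnq, e0, e1, e2]
  have hexp : Real.exp (ρ * p 0) = Real.exp (ρ * q 0) := by
    have h1 := Real.exp_pos (ρ * p 0)
    have h2 := Real.exp_pos (ρ * q 0)
    have hfac : (Real.exp (ρ * p 0) - Real.exp (ρ * q 0)) *
        (Real.exp (ρ * p 0) + Real.exp (ρ * q 0)) = 0 := by linear_combination hexp2
    rcases mul_eq_zero.mp hfac with h' | h'
    · linarith
    · exfalso; linarith
  have hx : p 0 = q 0 :=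
    mul_left_cancel₀ (ne_of_gt h0) (Real.exp_injective hexp)
  have hss : sp = sq' := by rw [hspdef, hsqdef, hx]
  have hfpos : 0 < sfun ρ sp := sfun_pos h0 hπ hsp0 hsp1
  have hmul : Real.exp (ρ * p 0) * sfun ρ sp ≠ 0 :=
    ne_of_gt (mul_pos (Real.exp_pos _) hfpos)
  have hy : p 1 = q 1 := by
    rw [hx, hss] at e1 hmul
    exact mul_left_cancel₀ hmul e1
  have hz : p 2 = q 2 := by
    rw [hx, hss] at e2 hmul
    exact mul_left_cancel₀ hmul e2
  ext i
  fin_cases i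
  · exact hx
  · exact hy
  · exact hz

lemma image_eq {ρ : ℝ} (h0 : 0 < ρ) (hπ : ρ < π) :
    ((fun p : ℝ × ℝ => geo p.1 p.2 ρ) ''
        (Set.Ioc (-π) π ×ˢ Set.Icc (-(π / 2)) (π / 2))) =
      F ρ '' Metric.sphere (0 : EuclideanSpace ℝ (Fin 3)) 1 := by
  apply Set.Subset.antisymm
  · rintro _ ⟨⟨u, v⟩, ⟨hu, hv⟩, rfl⟩
    refine ⟨(WithLp.equiv 2 (Fin 3 → ℝ)).symm
      ![Real.sin v, Real.cos v * Real.cos u, Real.cos v * Real.sin u], ?_, ?_⟩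
    · rw [mem_sphere_zero_iff_norm, EuclideanSpace.norm_eq]
      rw [Real.sqrt_eq_one]
      simp only [Fin.sum_univ_three, WithLp.equiv_symm_apply, PiLp.toLp_apply, Matrix.cons_val_zero,
        Matrix.cons_val_one, Matrix.head_cons, Matrix.cons_val_two, Matrix.tail_cons,
        Real.norm_eq_abs, sq_abs]
      linear_combination Real.sin_sq_add_cos_sq v +
        (Real.cos v) ^ 2 * Real.sin_sq_add_cos_sq u
    · -- F of this point is `geo u v ρ`
      have hcv : 0 ≤ Real.cos v :=
        Real.cos_nonneg_of_mem_Icc ⟨by linarith [hv.1], hv.2⟩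
      have hsq : Real.sqrt (1 - Real.sin v ^ 2) = Real.cos v := by
        rw [show (1 : ℝ) - Real.sin v ^ 2 = Real.cos v ^ 2 by
          nlinarith [Real.sin_sq_add_cos_sq v]]
        exact Real.sqrt_sq hcv
      have hp0 : ((WithLp.equiv 2 (Fin 3 → ℝ)).symm
          ![Real.sin v, Real.cos v * Real.cos u, Real.cos v * Real.sin u] :
            EuclideanSpace ℝ (Fin 3)) 0 = Real.sin v := by simp
      have hp1 : ((WithLp.equiv 2 (Fin 3 → ℝ)).symm
          ![Real.sin v, Real.cos v * Real.cos u, Real.cos v * Real.sin u] :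
            EuclideanSpace ℝ (Fin 3)) 1 = Real.cos v * Real.cos u := by simp
      have hp2 : ((WithLp.equiv 2 (Fin 3 → ℝ)).symm
          ![Real.sin v, Real.cos v * Real.cos u, Real.cos v * Real.sin u] :
            EuclideanSpace ℝ (Fin 3)) 2 = Real.cos v * Real.sin u := by simp
      have c1 : Real.exp (ρ * Real.sin v) * sfun ρ (Real.cos v) *
          (Real.cos v * Real.cos u) =
          Real.exp (ρ * Real.sin v) * Real.sin (ρ * Real.cos v) * Real.cos u := by
        rw [← sfun_mul ρ (Real.cos v)]; ring
      have c2 : Real.exp (ρ * Real.sin v) * sfun ρ (Real.cos v) *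
          (Real.cos v * Real.sin u) =
          Real.exp (ρ * Real.sin v) * Real.sin (ρ * Real.cos v) * Real.sin u := by
        rw [← sfun_mul ρ (Real.cos v)]; ring
      simp only [F, geo, hp0, hp1, hp2, hsq, c1, c2]
  · rintro _ ⟨q, hq, rfl⟩
    have hsum := sum_sq_of_mem_sphere hq
    have hx2 : q 0 ^ 2 ≤ 1 := by nlinarith
    have hxle : q 0 ≤ 1 := by nlinarith
    have hxge : -1 ≤ q 0 := by nlinarith
    set v := Real.arcsin (q 0) with hvdef
    set z : ℂ := ⟨q 1, q 2⟩ with hzdef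
    set u := Complex.arg z with hudef
    have hsinv : Real.sin v = q 0 := Real.sin_arcsin hxge hxle
    have hcosv : Real.cos v = Real.sqrt (1 - q 0 ^ 2) := Real.cos_arcsin (q 0)
    have habs : ‖z‖ = Real.sqrt (1 - q 0 ^ 2) := by
      rw [Complex.norm_def, hzdef, Complex.normSq_mk]
      congr 1
      nlinarith
    have hy : Real.sqrt (1 - q 0 ^ 2) * Real.cos u = q 1 := by
      rw [← habs]; exact Complex.norm_mul_cos_arg z
    have hzz : Real.sqrt (1 - q 0 ^ 2) * Real.sin u = q 2 := by
      rw [← habs]; exact Complex.norm_mul_sin_arg z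
    refine ⟨(u, v), ⟨Complex.arg_mem_Ioc z, Real.arcsin_mem_Icc (q 0)⟩, ?_⟩
    have hfm : sfun ρ (Real.sqrt (1 - q 0 ^ 2)) * Real.sqrt (1 - q 0 ^ 2) =
        Real.sin (ρ * Real.sqrt (1 - q 0 ^ 2)) := sfun_mul ρ _
    have c1 : Real.exp (ρ * q 0) * Real.sin (ρ * Real.sqrt (1 - q 0 ^ 2)) * Real.cos u =
        Real.exp (ρ * q 0) * sfun ρ (Real.sqrt (1 - q 0 ^ 2)) * q 1 := by
      rw [← hy, ← hfm]; ring
    have c2 : Real.exp (ρ * q 0) * Real.sin (ρ * Real.sqrt (1 - q 0 ^ 2)) * Real.sin u =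
        Real.exp (ρ * q 0) * sfun ρ (Real.sqrt (1 - q 0 ^ 2)) * q 2 := by
      rw [← hzz, ← hfm]; ring
    simp only [geo, F, hsinv, hcosv, c1, c2]

end SphereHomAux

/-- For `0 < ρ < π` the geodesic sphere of radius `ρ` in `S² × ℝ`, i.e. the image of
`(−π, π] × [−π/2, π/2]` under `S_ρ(u, v) = γ_{u,v}(ρ)`, is homeomorphic to the standard
unit 2-sphere; in particular it is a simply connected closed surface (Proposition 2.3). -/
theorem sphere_homeomorph (ρ : ℝ) (h0 : 0 < ρ) (hπ : ρ < π) :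
    Nonempty
      (((fun p : ℝ × ℝ => geo p.1 p.2 ρ) ''
          (Set.Ioc (-π) π ×ˢ Set.Icc (-(π / 2)) (π / 2)) : Set (EuclideanSpace ℝ (Fin 3))) ≃ₜ
        (Metric.sphere (0 : EuclideanSpace ℝ (Fin 3)) 1)) := by
  classical
  set S : Set (EuclideanSpace ℝ (Fin 3)) := Metric.sphere 0 1 with hS
  let K : S → EuclideanSpace ℝ (Fin 3) := fun q => SphereHomAux.F ρ q.1
  have hcont : Continuous K :=
    (SphereHomAux.F_continuous ρ).comp continuous_subtype_val
  have hinj : Function.Injective K := by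
    intro p q h
    exact Subtype.ext (SphereHomAux.F_injOn h0 hπ p.2 q.2 h)
  have hemb := hcont.isClosedEmbedding hinj
  let e : S ≃ₜ Set.range K := hemb.toIsEmbedding.toHomeomorph
  have hr : SphereHomAux.F ρ '' S = Set.range K := Set.image_eq_range _ _
  have him := SphereHomAux.image_eq h0 hπ
  exact ⟨(Homeomorph.setCongr him).trans
    ((Homeomorph.setCongr hr).trans e.symm)⟩
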